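/- Let A₂(n) denote the number of permutations of length n containing no 132 pattern and exactly two 123 patterns. Then in ℚ[[z]], the generating function F₂(z) = ∑_{n≥0} A₂(n)·zⁿ satisfies (1 - 2z)³·F₂(z) = z⁴·(1 - z). -/

import Mathlib

/-- The number of 132 patterns of a permutation `π` of `Fin n`:
triples of indices `i₁ < i₂ < i₃` with `π i₁ < π i₃ < π i₂`. -/
def count132 {n : ℕ} (π : Equiv.Perm (Fin n)) : ℕ :=
  (Finset.univ.filter (fun p : Fin n × Fin n × Fin n =>
    p.1 < p.2.1 ∧ p.2.1 < p.2.2 ∧ π p.1 < π p.2.2 ∧ π p.2.2 < π p.2.1)).card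

/-- The number of 123 patterns of a permutation `π` of `Fin n`:
triples of indices `i₁ < i₂ < i₃` with `π i₁ < π i₂ < π i₃`. -/
def count123 {n : ℕ} (π : Equiv.Perm (Fin n)) : ℕ :=
  (Finset.univ.filter (fun p : Fin n × Fin n × Fin n =>
    p.1 < p.2.1 ∧ p.2.1 < p.2.2 ∧ π p.1 < π p.2.1 ∧ π p.2.1 < π p.2.2)).card

/-- The number of 12 patterns of a permutation `π` of `Fin n`:
pairs of indices `i₁ < i₂` with `π i₁ < π i₂`. -/
def count12 {n : ℕ} (π : Equiv.Perm (Fin n)) : ℕ :=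
  (Finset.univ.filter (fun p : Fin n × Fin n =>
    p.1 < p.2 ∧ π p.1 < π p.2)).card

/-- The number of permutations of length n with no 132 pattern and exactly 2 123 patterns. -/
def A (n : ℕ) : ℕ :=
  (Finset.univ.filter (fun π : Equiv.Perm (Fin n) =>
    count132 π = 0 ∧ count123 π = 2)).card



/-- number of ascending pairs -/
def cnt12 : List ℕ → ℕ
  | [] => 0
  | x :: xs => xs.countP (fun y => decide (x < y)) + cnt12 xs

/-- number of descending pairs -/
def cnt21 : List ℕ → ℕ
  | [] => 0
  | x :: xs => xs.countP (fun y => decide (y < x)) + cnt21 xs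

def cnt123 : List ℕ → ℕ
  | [] => 0
  | x :: xs => cnt12 (xs.filter (fun y => decide (x < y))) + cnt123 xs

def cnt132 : List ℕ → ℕ
  | [] => 0
  | x :: xs => cnt21 (xs.filter (fun y => decide (x < y))) + cnt132 xs

lemma countP_eq_zero' {p : ℕ → Bool} {l : List ℕ} (h : ∀ x ∈ l, ¬ p x) :
    l.countP p = 0 := by
  rw [List.countP_eq_zero]; exact h

lemma cnt12_append (xs ys : List ℕ) :
    cnt12 (xs ++ ys) = cnt12 xs + cnt12 ys
      + (xs.map (fun x => ys.countP (fun y => decide (x < y)))).sum := by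
  induction xs with
  | nil => simp [cnt12]
  | cons x xs ih =>
      simp only [List.cons_append, cnt12, List.append_eq, List.countP_append, ih,
        List.map_cons, List.sum_cons]
      omega

lemma cnt21_append (xs ys : List ℕ) :
    cnt21 (xs ++ ys) = cnt21 xs + cnt21 ys
      + (xs.map (fun x => ys.countP (fun y => decide (y < x)))).sum := by
  induction xs with
  | nil => simp [cnt21]
  | cons x xs ih =>
      simp only [List.cons_append, cnt21, List.append_eq, List.countP_append, ih,
        List.map_cons, List.sum_cons]
      omega

/-- glue lemma for cnt12 -/
lemma cnt12_glue (F B : List ℕ) (m : ℕ) (hF : ∀ x ∈ F, x < m) (hBm : ∀ y ∈ B, y < m)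
    (hBF : ∀ x ∈ F, ∀ y ∈ B, y < x) :
    cnt12 (F ++ m :: B) = cnt12 F + cnt12 B + F.length := by
  rw [cnt12_append]
  simp only [cnt12]
  have h1 : ∀ x ∈ F, (m :: B).countP (fun y => decide (x < y)) = 1 := by
    intro x hx
    rw [List.countP_cons]
    rw [countP_eq_zero' (fun y hy => by simp [Nat.not_lt.2 (le_of_lt (hBF x hx y hy))])]
    simp [hF x hx]
  have h2 : B.countP (fun y => decide (m < y)) = 0 :=
    countP_eq_zero' (fun y hy => by simp [Nat.not_lt.2 (le_of_lt (hBm y hy))])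
  rw [List.map_congr_left h1, h2]
  simp

lemma filter_eq_nil' {p : ℕ → Bool} {l : List ℕ} (h : ∀ x ∈ l, ¬ p x) :
    l.filter p = [] := by
  rw [List.filter_eq_nil_iff]; exact h

lemma cnt123_glue (F B : List ℕ) (m : ℕ) (hF : ∀ x ∈ F, x < m) (hBm : ∀ y ∈ B, y < m)
    (hBF : ∀ x ∈ F, ∀ y ∈ B, y < x) :
    cnt123 (F ++ m :: B) = cnt123 F + cnt12 F + cnt123 B := by
  induction F with
  | nil =>
      simp only [List.nil_append, cnt123, cnt12]
      rw [filter_eq_nil' (fun y hy => by simp [Nat.not_lt.2 (le_of_lt (hBm y hy))])]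
      simp [cnt12]
  | cons x F ih =>
      have hF' : ∀ z ∈ F, z < m := fun z hz => hF z (List.mem_cons_of_mem _ hz)
      have hBF' : ∀ z ∈ F, ∀ y ∈ B, y < z := fun z hz => hBF z (List.mem_cons_of_mem _ hz)
      simp only [List.cons_append, cnt123, cnt12, List.append_eq]
      rw [ih hF' hBF']
      have hfil : (F ++ m :: B).filter (fun y => decide (x < y))
          = (F.filter (fun y => decide (x < y))) ++ [m] := by
        rw [List.filter_append]
        congr 1
        rw [List.filter_cons]
        simp only [decide_eq_true_eq, hF x (List.mem_cons_self), if_pos]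
        rw [filter_eq_nil' (fun y hy => by
          simp [Nat.not_lt.2 (le_of_lt (hBF x (List.mem_cons_self) y hy))])]
      rw [hfil]
      have : cnt12 ((F.filter (fun y => decide (x < y))) ++ [m])
          = cnt12 (F.filter (fun y => decide (x < y)))
            + (F.filter (fun y => decide (x < y))).length := by
        rw [cnt12_append]
        have : ∀ z ∈ F.filter (fun y => decide (x < y)),
            ([m].countP (fun y => decide (z < y))) = 1 := by
          intro z hz
          have := hF' z (List.mem_of_mem_filter hz)
          simp [List.countP_cons, this]
        rw [List.map_congr_left this]
        simp [cnt12]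
      rw [this, List.countP_eq_length_filter]
      omega

lemma cnt21_append_single (l : List ℕ) (m : ℕ) (h : ∀ x ∈ l, x < m) :
    cnt21 (l ++ [m]) = cnt21 l := by
  rw [cnt21_append]
  have : ∀ z ∈ l, ([m].countP (fun y => decide (y < z))) = 0 := by
    intro z hz
    simp [List.countP_cons, Nat.not_lt.2 (le_of_lt (h z hz))]
  rw [List.map_congr_left this]
  simp [cnt21]

lemma cnt132_glue (F B : List ℕ) (m : ℕ) (hF : ∀ x ∈ F, x < m) (hBm : ∀ y ∈ B, y < m)
    (hBF : ∀ x ∈ F, ∀ y ∈ B, y < x) :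
    cnt132 (F ++ m :: B) = cnt132 F + cnt132 B := by
  induction F with
  | nil =>
      simp only [List.nil_append, cnt132]
      rw [filter_eq_nil' (fun y hy => by simp [Nat.not_lt.2 (le_of_lt (hBm y hy))])]
      simp [cnt21, cnt132]
  | cons x F ih =>
      have hF' : ∀ z ∈ F, z < m := fun z hz => hF z (List.mem_cons_of_mem _ hz)
      have hBF' : ∀ z ∈ F, ∀ y ∈ B, y < z := fun z hz => hBF z (List.mem_cons_of_mem _ hz)
      simp only [List.cons_append, cnt132, List.append_eq]
      rw [ih hF' hBF']
      have hfil : (F ++ m :: B).filter (fun y => decide (x < y))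
          = (F.filter (fun y => decide (x < y))) ++ [m] := by
        rw [List.filter_append]
        congr 1
        rw [List.filter_cons]
        simp only [decide_eq_true_eq, hF x (List.mem_cons_self), if_pos]
        rw [filter_eq_nil' (fun y hy => by
          simp [Nat.not_lt.2 (le_of_lt (hBF x (List.mem_cons_self) y hy))])]
      rw [hfil, cnt21_append_single _ _ (fun z hz => hF' z (List.mem_of_mem_filter hz))]
      omega

lemma cnt12_map_add (c : ℕ) (l : List ℕ) : cnt12 (l.map (· + c)) = cnt12 l := by
  induction l with
  | nil => rfl
  | cons x l ih =>
      simp only [List.map_cons, cnt12, ih, List.countP_map]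
      congr 1
      apply List.countP_congr
      intro y _
      simp

lemma cnt21_map_add (c : ℕ) (l : List ℕ) : cnt21 (l.map (· + c)) = cnt21 l := by
  induction l with
  | nil => rfl
  | cons x l ih =>
      simp only [List.map_cons, cnt21, ih, List.countP_map]
      congr 1
      apply List.countP_congr
      intro y _
      simp

lemma filter_map_add (c x : ℕ) (l : List ℕ) :
    (l.map (· + c)).filter (fun y => decide (x + c < y))
      = (l.filter (fun y => decide (x < y))).map (· + c) := by
  rw [List.filter_map]
  congr 1
  apply List.filter_congr
  intro y _
  simp

lemma cnt123_map_add (c : ℕ) (l : List ℕ) : cnt123 (l.map (· + c)) = cnt123 l := by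
  induction l with
  | nil => rfl
  | cons x l ih =>
      simp only [List.map_cons, cnt123, ih, filter_map_add, cnt12_map_add]

lemma cnt132_map_add (c : ℕ) (l : List ℕ) : cnt132 (l.map (· + c)) = cnt132 l := by
  induction l with
  | nil => rfl
  | cons x l ih =>
      simp only [List.map_cons, cnt132, ih, filter_map_add, cnt21_map_add]

lemma countP_ofFn {n : ℕ} (g : Fin n → ℕ) (p : ℕ → Bool) :
    (List.ofFn g).countP p = ∑ i : Fin n, if p (g i) then 1 else 0 := by
  induction n with
  | zero => simp
  | succ n ih =>
      rw [List.ofFn_succ, List.countP_cons, Fin.sum_univ_succ, ih]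
      cases h : p (g 0) <;> simp [h] <;> omega


lemma sum12P {n : ℕ} (g : Fin n → ℕ) (P : ℕ → Bool) :
    (∑ j : Fin n, ∑ k : Fin n,
      if j < k ∧ P (g j) ∧ P (g k) ∧ g j < g k then 1 else 0)
      = cnt12 ((List.ofFn g).filter P) := by
  induction n with
  | zero => simp [cnt12]
  | succ n ih =>
      rw [Fin.sum_univ_succ, List.ofFn_succ, List.filter_cons]
      have hrest : (∑ j : Fin n, ∑ k : Fin (n+1),
          if j.succ < k ∧ P (g j.succ) ∧ P (g k) ∧ g j.succ < g k then 1 else 0)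
          = cnt12 ((List.ofFn (g ∘ Fin.succ)).filter P) := by
        rw [← ih (g ∘ Fin.succ)]
        apply Finset.sum_congr rfl; intro j _
        rw [Fin.sum_univ_succ]
        simp only [Fin.not_lt_zero, false_and, if_false, Finset.sum_const_zero, zero_add]
        apply Finset.sum_congr rfl; intro k _
        refine if_congr ?_ rfl rfl
        simp [Fin.succ_lt_succ_iff]
      have h0 : (∑ k : Fin (n+1),
          if (0 : Fin (n+1)) < k ∧ P (g 0) ∧ P (g k) ∧ g 0 < g k then 1 else 0)
          = if P (g 0)
            then ((List.ofFn (g ∘ Fin.succ)).filter P).countP (fun y => decide (g 0 < y))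
            else 0 := by
        rw [Fin.sum_univ_succ]
        simp only [lt_self_iff_false, false_and, if_false, Finset.sum_const_zero, zero_add]
        rw [List.countP_filter, countP_ofFn]
        cases h : P (g 0)
        · simp [h]
        · simp only [h, if_true]
          apply Finset.sum_congr rfl; intro k _
          refine if_congr ?_ rfl rfl
          simp [Fin.succ_pos, and_comm]
      rw [hrest, h0]
      cases h : P (g 0)
      · simp [h, Function.comp_def]
      · simp [h, cnt12, Function.comp_def]

lemma sum21P {n : ℕ} (g : Fin n → ℕ) (P : ℕ → Bool) :
    (∑ j : Fin n, ∑ k : Fin n,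
      if j < k ∧ P (g j) ∧ P (g k) ∧ g k < g j then 1 else 0)
      = cnt21 ((List.ofFn g).filter P) := by
  induction n with
  | zero => simp [cnt21]
  | succ n ih =>
      rw [Fin.sum_univ_succ, List.ofFn_succ, List.filter_cons]
      have hrest : (∑ j : Fin n, ∑ k : Fin (n+1),
          if j.succ < k ∧ P (g j.succ) ∧ P (g k) ∧ g k < g j.succ then 1 else 0)
          = cnt21 ((List.ofFn (g ∘ Fin.succ)).filter P) := by
        rw [← ih (g ∘ Fin.succ)]
        apply Finset.sum_congr rfl; intro j _
        rw [Fin.sum_univ_succ]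
        simp only [Fin.not_lt_zero, false_and, if_false, Finset.sum_const_zero, zero_add]
        apply Finset.sum_congr rfl; intro k _
        refine if_congr ?_ rfl rfl
        simp [Fin.succ_lt_succ_iff]
      have h0 : (∑ k : Fin (n+1),
          if (0 : Fin (n+1)) < k ∧ P (g 0) ∧ P (g k) ∧ g k < g 0 then 1 else 0)
          = if P (g 0)
            then ((List.ofFn (g ∘ Fin.succ)).filter P).countP (fun y => decide (y < g 0))
            else 0 := by
        rw [Fin.sum_univ_succ]
        simp only [lt_self_iff_false, false_and, if_false, Finset.sum_const_zero, zero_add]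
        rw [List.countP_filter, countP_ofFn]
        cases h : P (g 0)
        · simp [h]
        · simp only [h, if_true]
          apply Finset.sum_congr rfl; intro k _
          refine if_congr ?_ rfl rfl
          simp [Fin.succ_pos, and_comm]
      rw [hrest, h0]
      cases h : P (g 0)
      · simp [h, Function.comp_def]
      · simp [h, cnt21, Function.comp_def]

lemma sum123 {n : ℕ} (f : Fin n → ℕ) :
    (∑ i : Fin n, ∑ j : Fin n, ∑ k : Fin n,
      if i < j ∧ j < k ∧ f i < f j ∧ f j < f k then 1 else 0)
      = cnt123 (List.ofFn f) := by
  induction n with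
  | zero => simp [cnt123]
  | succ n ih =>
      rw [Fin.sum_univ_succ, List.ofFn_succ]
      show _ = cnt12 _ + cnt123 _
      have hrest : (∑ i : Fin n, ∑ j : Fin (n+1), ∑ k : Fin (n+1),
          if i.succ < j ∧ j < k ∧ f i.succ < f j ∧ f j < f k then 1 else 0)
          = cnt123 (List.ofFn (f ∘ Fin.succ)) := by
        rw [← ih (f ∘ Fin.succ)]
        apply Finset.sum_congr rfl; intro i _
        rw [Fin.sum_univ_succ]
        simp only [Fin.not_lt_zero, false_and, if_false, Finset.sum_const_zero, zero_add]
        apply Finset.sum_congr rfl; intro j _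
        rw [Fin.sum_univ_succ]
        simp only [Fin.not_lt_zero, false_and, and_false, if_false, Finset.sum_const_zero, zero_add]
        apply Finset.sum_congr rfl; intro k _
        refine if_congr ?_ rfl rfl
        simp [Fin.succ_lt_succ_iff]
      have h0 : (∑ j : Fin (n+1), ∑ k : Fin (n+1),
          if (0 : Fin (n+1)) < j ∧ j < k ∧ f 0 < f j ∧ f j < f k then 1 else 0)
          = cnt12 ((List.ofFn (f ∘ Fin.succ)).filter (fun y => decide (f 0 < y))) := by
        rw [← sum12P (f ∘ Fin.succ) (fun y => decide (f 0 < y))]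
        rw [Fin.sum_univ_succ]
        simp only [lt_self_iff_false, false_and, if_false, Finset.sum_const_zero, zero_add]
        apply Finset.sum_congr rfl; intro j _
        rw [Fin.sum_univ_succ]
        simp only [Fin.not_lt_zero, false_and, and_false, if_false, Finset.sum_const_zero, zero_add]
        apply Finset.sum_congr rfl; intro k _
        refine if_congr ?_ rfl rfl
        constructor
        · rintro ⟨-, hjk, h1, h2⟩
          exact ⟨Fin.succ_lt_succ_iff.mp hjk, by simpa using h1, by simp; omega, by simpa using h2⟩
        · rintro ⟨hjk, h1, h2, h3⟩
          exact ⟨Fin.succ_pos _, Fin.succ_lt_succ_iff.mpr hjk, by simpa using h1, by simpa using h3⟩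
      rw [hrest, h0]
      simp [Function.comp_def]

lemma sum132 {n : ℕ} (f : Fin n → ℕ) :
    (∑ i : Fin n, ∑ j : Fin n, ∑ k : Fin n,
      if i < j ∧ j < k ∧ f i < f k ∧ f k < f j then 1 else 0)
      = cnt132 (List.ofFn f) := by
  induction n with
  | zero => simp [cnt132]
  | succ n ih =>
      rw [Fin.sum_univ_succ, List.ofFn_succ]
      show _ = cnt21 _ + cnt132 _
      have hrest : (∑ i : Fin n, ∑ j : Fin (n+1), ∑ k : Fin (n+1),
          if i.succ < j ∧ j < k ∧ f i.succ < f k ∧ f k < f j then 1 else 0)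
          = cnt132 (List.ofFn (f ∘ Fin.succ)) := by
        rw [← ih (f ∘ Fin.succ)]
        apply Finset.sum_congr rfl; intro i _
        rw [Fin.sum_univ_succ]
        simp only [Fin.not_lt_zero, false_and, if_false, Finset.sum_const_zero, zero_add]
        apply Finset.sum_congr rfl; intro j _
        rw [Fin.sum_univ_succ]
        simp only [Fin.not_lt_zero, false_and, and_false, if_false, Finset.sum_const_zero, zero_add]
        apply Finset.sum_congr rfl; intro k _
        refine if_congr ?_ rfl rfl
        simp [Fin.succ_lt_succ_iff]
      have h0 : (∑ j : Fin (n+1), ∑ k : Fin (n+1),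
          if (0 : Fin (n+1)) < j ∧ j < k ∧ f 0 < f k ∧ f k < f j then 1 else 0)
          = cnt21 ((List.ofFn (f ∘ Fin.succ)).filter (fun y => decide (f 0 < y))) := by
        rw [← sum21P (f ∘ Fin.succ) (fun y => decide (f 0 < y))]
        rw [Fin.sum_univ_succ]
        simp only [lt_self_iff_false, false_and, if_false, Finset.sum_const_zero, zero_add]
        apply Finset.sum_congr rfl; intro j _
        rw [Fin.sum_univ_succ]
        simp only [Fin.not_lt_zero, false_and, and_false, if_false, Finset.sum_const_zero, zero_add]
        apply Finset.sum_congr rfl; intro k _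
        refine if_congr ?_ rfl rfl
        constructor
        · rintro ⟨-, hjk, h1, h2⟩
          exact ⟨Fin.succ_lt_succ_iff.mp hjk, by simp; omega, by simpa using h1, by simpa using h2⟩
        · rintro ⟨hjk, h1, h2, h3⟩
          exact ⟨Fin.succ_pos _, Fin.succ_lt_succ_iff.mpr hjk, by simpa using h2, by simpa using h3⟩
      rw [hrest, h0]
      simp [Function.comp_def]


/-- the word of a permutation -/
def listOf {n : ℕ} (π : Equiv.Perm (Fin n)) : List ℕ :=
  List.ofFn (fun i => ((π i : Fin n) : ℕ))

lemma count12_eq {n : ℕ} (π : Equiv.Perm (Fin n)) :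
    count12 π = cnt12 (listOf π) := by
  rw [count12, Finset.card_filter, Fintype.sum_prod_type, listOf]
  rw [show (List.ofFn fun i => ((π i : Fin n) : ℕ))
      = (List.ofFn fun i => ((π i : Fin n) : ℕ)).filter (fun _ => true) by
    simp]
  rw [← sum12P (fun i => ((π i : Fin n) : ℕ)) (fun _ => true)]
  apply Finset.sum_congr rfl; intro j _
  apply Finset.sum_congr rfl; intro k _
  refine if_congr ?_ rfl rfl
  constructor
  · rintro ⟨h1, h2⟩; exact ⟨h1, rfl, rfl, h2⟩
  · rintro ⟨h1, -, -, h2⟩; exact ⟨h1, h2⟩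

lemma count123_eq {n : ℕ} (π : Equiv.Perm (Fin n)) :
    count123 π = cnt123 (listOf π) := by
  rw [count123, Finset.card_filter, Fintype.sum_prod_type, listOf]
  rw [← sum123 (fun i => ((π i : Fin n) : ℕ))]
  apply Finset.sum_congr rfl; intro i _
  rw [Fintype.sum_prod_type]
  apply Finset.sum_congr rfl; intro j _
  apply Finset.sum_congr rfl; intro k _
  refine if_congr ?_ rfl rfl
  exact Iff.rfl

lemma count132_eq {n : ℕ} (π : Equiv.Perm (Fin n)) :
    count132 π = cnt132 (listOf π) := by
  rw [count132, Finset.card_filter, Fintype.sum_prod_type, listOf]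
  rw [← sum132 (fun i => ((π i : Fin n) : ℕ))]
  apply Finset.sum_congr rfl; intro i _
  rw [Fintype.sum_prod_type]
  apply Finset.sum_congr rfl; intro j _
  apply Finset.sum_congr rfl; intro k _
  refine if_congr ?_ rfl rfl
  exact Iff.rfl

section Splice
variable {n a : ℕ} (h : a ≤ n) (A : Equiv.Perm (Fin a)) (B : Equiv.Perm (Fin (n - a)))

/-- glue two permutations: top values (shifted A), then max, then B -/
def spliceFun (x : Fin (n+1)) : Fin (n+1) :=
  if hx : (x : ℕ) < a then
    ⟨(A ⟨x, hx⟩ : ℕ) + (n - a), by have := (A ⟨x, hx⟩).isLt; omega⟩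
  else if hx' : (x : ℕ) = a then ⟨n, Nat.lt_succ_self n⟩
  else ⟨(B ⟨(x : ℕ) - a - 1, by have := x.isLt; omega⟩ : ℕ),
    by have := (B ⟨(x : ℕ) - a - 1, by have := x.isLt; omega⟩).isLt; omega⟩

lemma spliceFun_injective : Function.Injective (spliceFun h A B) := by
  intro x y hxy
  unfold spliceFun at hxy
  have hAx : ∀ (i : Fin a), (A i : ℕ) < a := fun i => (A i).isLt
  have hBx : ∀ (i : Fin (n - a)), (B i : ℕ) < n - a := fun i => (B i).isLt
  by_cases hx : (x : ℕ) < a <;> by_cases hy : (y : ℕ) < a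
  · simp only [hx, hy, dif_pos] at hxy
    have hv := congrArg Fin.val hxy
    simp at hv
    have : A ⟨x, hx⟩ = A ⟨y, hy⟩ := Fin.ext (by omega)
    have := congrArg Fin.val (A.injective this)
    simp at this
    exact Fin.ext this
  · simp only [hx, hy, dif_pos, dif_neg] at hxy
    by_cases hy' : (y : ℕ) = a <;> simp only [hy', dif_pos, dif_neg] at hxy <;>
      [skip; skip] <;>
      · have := congrArg Fin.val hxy
        simp at this
        have := hAx ⟨x, hx⟩
        first
          | omega
          | (have := hBx ⟨(y : ℕ) - a - 1, by have := y.isLt; omega⟩; omega)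
  · simp only [hx, hy, dif_pos, dif_neg] at hxy
    by_cases hx' : (x : ℕ) = a <;> simp only [hx', dif_pos, dif_neg] at hxy <;>
      · have := congrArg Fin.val hxy
        simp at this
        have := hAx ⟨y, hy⟩
        first
          | omega
          | (have := hBx ⟨(x : ℕ) - a - 1, by have := x.isLt; omega⟩; omega)
  · simp only [hx, hy, dif_neg] at hxy
    by_cases hx' : (x : ℕ) = a <;> by_cases hy' : (y : ℕ) = a <;>
      simp only [hx', hy', dif_pos, dif_neg] at hxy
    · exact Fin.ext (hx' ▸ hy'.symm ▸ rfl)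
    · have := congrArg Fin.val hxy
      simp at this
      have := hBx ⟨(y : ℕ) - a - 1, by have := y.isLt; omega⟩
      omega
    · have := congrArg Fin.val hxy
      simp at this
      have := hBx ⟨(x : ℕ) - a - 1, by have := x.isLt; omega⟩
      omega
    · have := congrArg Fin.val hxy
      simp at this
      have hB : (⟨(x : ℕ) - a - 1, by have := x.isLt; omega⟩ : Fin (n - a))
          = ⟨(y : ℕ) - a - 1, by have := y.isLt; omega⟩ :=
        B.injective (Fin.ext this)
      have := congrArg Fin.val hB
      simp at this
      apply Fin.ext
      omega

/-- the spliced permutation -/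
noncomputable def splice : Equiv.Perm (Fin (n+1)) :=
  Equiv.ofBijective _ (Finite.injective_iff_bijective.mp (spliceFun_injective h A B))

lemma splice_apply (x : Fin (n+1)) : splice h A B x = spliceFun h A B x := rfl

lemma listOf_splice :
    listOf (splice h A B)
      = (listOf A).map (· + (n - a)) ++ (n : ℕ) :: listOf B := by
  apply List.ext_getElem
  · simp [listOf]; omega
  · intro i h1 h2
    simp only [listOf, List.length_ofFn] at h1
    simp only [listOf, List.getElem_ofFn, splice_apply]
    by_cases hi : i < a
    · rw [List.getElem_append_left (by simp; omega)]
      rw [List.getElem_map, List.getElem_ofFn]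
      simp only [spliceFun]
      rw [dif_pos hi]
    · rw [List.getElem_append_right (by simp; omega)]
      by_cases hi' : i = a
      · subst hi'
        simp only [List.length_map, List.length_ofFn]
        rw [List.getElem_cons]
        rw [dif_pos (by omega)]
        simp [spliceFun]
      · simp only [List.length_map, List.length_ofFn]
        rw [List.getElem_cons]
        rw [dif_neg (by omega)]
        rw [List.getElem_ofFn]
        simp only [spliceFun]
        rw [dif_neg (by omega), dif_neg (by omega)]

end Splice

section SpliceCounts
variable {n a : ℕ} (h : a ≤ n) (A : Equiv.Perm (Fin a)) (B : Equiv.Perm (Fin (n - a)))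

lemma mem_listOf_lt {m : ℕ} (π : Equiv.Perm (Fin m)) : ∀ x ∈ listOf π, x < m := by
  intro x hx
  rw [listOf, List.mem_ofFn] at hx
  obtain ⟨i, rfl⟩ := hx
  exact (π i).isLt

lemma splice_glue_hyps (han : a ≤ n) :
    (∀ x ∈ (listOf A).map (· + (n - a)), x < n)
    ∧ (∀ y ∈ listOf B, y < n)
    ∧ (∀ x ∈ (listOf A).map (· + (n - a)), ∀ y ∈ listOf B, y < x) := by
  refine ⟨?_, ?_, ?_⟩
  · intro x hx
    rw [List.mem_map] at hx
    obtain ⟨z, hz, rfl⟩ := hx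
    have := mem_listOf_lt A z hz
    have := han
    omega
  · intro y hy
    have := mem_listOf_lt B y hy
    omega
  · intro x hx y hy
    rw [List.mem_map] at hx
    obtain ⟨z, hz, rfl⟩ := hx
    have := mem_listOf_lt B y hy
    omega

lemma count12_splice :
    count12 (splice h A B) = count12 A + count12 B + a := by
  obtain ⟨g1, g2, g3⟩ := splice_glue_hyps (A := A) (B := B) h
  rw [count12_eq, listOf_splice, cnt12_glue _ _ _ g1 g2 g3,
    cnt12_map_add, ← count12_eq, ← count12_eq]
  simp [listOf]

lemma count123_splice :
    count123 (splice h A B) = count123 A + count12 A + count123 B := by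
  obtain ⟨g1, g2, g3⟩ := splice_glue_hyps (A := A) (B := B) h
  rw [count123_eq, listOf_splice, cnt123_glue _ _ _ g1 g2 g3,
    cnt123_map_add, cnt12_map_add, ← count123_eq, ← count123_eq, ← count12_eq]

lemma count132_splice :
    count132 (splice h A B) = count132 A + count132 B := by
  obtain ⟨g1, g2, g3⟩ := splice_glue_hyps (A := A) (B := B) h
  rw [count132_eq, listOf_splice, cnt132_glue _ _ _ g1 g2 g3,
    cnt132_map_add, ← count132_eq, ← count132_eq]

end SpliceCounts

section Extract
variable {n : ℕ} (π : Equiv.Perm (Fin (n+1)))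

/-- the top element -/
abbrev topF : Fin (n+1) := ⟨n, Nat.lt_succ_self n⟩

/-- position of the maximum -/
def posMax : ℕ := ((π.symm (topF)) : ℕ)

lemma posMax_le : posMax π ≤ n := Nat.lt_succ_iff.mp (π.symm topF).isLt

lemma apply_posMax : π ⟨posMax π, Nat.lt_succ_iff.mpr (posMax_le π)⟩ = topF := by
  have : (⟨posMax π, Nat.lt_succ_iff.mpr (posMax_le π)⟩ : Fin (n+1)) = π.symm topF :=
    Fin.ext rfl
  rw [this, Equiv.apply_symm_apply]

lemma ne_top_of_ne {i : Fin (n+1)} (hi : (i : ℕ) ≠ posMax π) : (π i : ℕ) ≠ n := by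
  intro hcon
  have : π i = topF := Fin.ext hcon
  have : i = π.symm topF := by rw [← this]; simp
  exact hi (congrArg Fin.val this)

/-- no 132 pattern: elements before the max are bigger than elements after -/
lemma front_gt_back (hπ : count132 π = 0) {i j : Fin (n+1)}
    (hi : (i : ℕ) < posMax π) (hj : posMax π < (j : ℕ)) : π j < π i := by
  by_contra hcon
  push_neg at hcon
  have hne : π i ≠ π j := fun hc => by
    have := π.injective hc
    subst this
    omega
  have hlt : π i < π j := lt_of_le_of_ne hcon hne
  have hjn : (π j : ℕ) < n := by
    have := ne_top_of_ne π (i := j) (by omega)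
    have := (π j).isLt
    omega
  have hmem : (i, (⟨posMax π, Nat.lt_succ_iff.mpr (posMax_le π)⟩ : Fin (n+1)), j)
      ∈ (Finset.univ.filter (fun p : Fin (n+1) × Fin (n+1) × Fin (n+1) =>
        p.1 < p.2.1 ∧ p.2.1 < p.2.2 ∧ π p.1 < π p.2.2 ∧ π p.2.2 < π p.2.1)) := by
    rw [Finset.mem_filter]
    refine ⟨Finset.mem_univ _, hi, hj, hlt, ?_⟩
    rw [apply_posMax]
    show (π j : ℕ) < n
    exact hjn
  rw [count132] at hπ
  rw [Finset.card_eq_zero] at hπ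
  rw [hπ] at hmem
  exact absurd hmem (Finset.notMem_empty _)

lemma card_Ioi' (c : Fin (n+1)) :
    (Finset.univ.filter (fun j : Fin (n+1) => c < j)).card = n - (c : ℕ) := by
  have : (Finset.univ.filter (fun j : Fin (n+1) => c < j)) = Finset.Ioi c := by
    ext j; simp
  rw [this, Fin.card_Ioi]
  rfl

lemma card_Iio' (c : Fin (n+1)) :
    (Finset.univ.filter (fun j : Fin (n+1) => j < c)).card = (c : ℕ) := by
  have : (Finset.univ.filter (fun j : Fin (n+1) => j < c)) = Finset.Iio c := by
    ext j; simp
  rw [this]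
  exact Fin.card_Iio c

/-- front values are at least n - a -/
lemma front_ge (hπ : count132 π = 0) {i : Fin (n+1)} (hi : (i : ℕ) < posMax π) :
    n - posMax π ≤ (π i : ℕ) := by
  have hcard : (Finset.univ.filter (fun j : Fin (n+1) => (⟨posMax π,
      Nat.lt_succ_iff.mpr (posMax_le π)⟩ : Fin (n+1)) < j)).card
      ≤ (Finset.univ.filter (fun y : Fin (n+1) => y < π i)).card := by
    apply Finset.card_le_card_of_injOn π
    · intro j hj
      rw [Finset.mem_coe, Finset.mem_filter] at hj ⊢
      exact ⟨Finset.mem_univ _, front_gt_back π hπ hi hj.2⟩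
    · exact fun x _ y _ hxy => π.injective hxy
  rw [card_Ioi', card_Iio'] at hcard
  exact hcard

/-- back values are less than n - a -/
lemma back_lt (hπ : count132 π = 0) {j : Fin (n+1)} (hj : posMax π < (j : ℕ)) :
    (π j : ℕ) < n - posMax π := by
  have hcard : (Finset.univ.filter (fun i : Fin (n+1) => i < (⟨posMax π + 1,
      by have := posMax_le π; omega⟩ : Fin (n+1)))).card
      ≤ (Finset.univ.filter (fun y : Fin (n+1) => π j < y)).card := by
    apply Finset.card_le_card_of_injOn π
    · intro i hi
      rw [Finset.mem_coe, Finset.mem_filter] at hi ⊢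
      refine ⟨Finset.mem_univ _, ?_⟩
      have hival : (i : ℕ) < posMax π + 1 := hi.2
      by_cases hc : (i : ℕ) < posMax π
      · exact front_gt_back π hπ hc hj
      · have : (i : ℕ) = posMax π := by omega
        have : i = ⟨posMax π, Nat.lt_succ_iff.mpr (posMax_le π)⟩ := Fin.ext this
        rw [this, apply_posMax]
        show (π j : ℕ) < n
        have := ne_top_of_ne π (i := j) (by omega)
        have := (π j).isLt
        omega
    · exact fun x _ y _ hxy => π.injective hxy
  rw [card_Ioi', card_Iio'] at hcard
  simp at hcard
  have := (π j).isLt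
  omega

end Extract

section Extract2
variable {n : ℕ} (π : Equiv.Perm (Fin (n+1))) (hπ : count132 π = 0)

/-- extracted front permutation -/
noncomputable def frontPerm : Equiv.Perm (Fin (posMax π)) := by
  refine Equiv.ofBijective (fun i => (⟨(π ⟨(i : ℕ), by have := i.isLt; have := posMax_le π; omega⟩ : ℕ)
      - (n - posMax π), ?_⟩ : Fin (posMax π))) (Finite.injective_iff_bijective.mp ?_)
  · have h1 := front_ge π hπ (i := ⟨(i : ℕ), by have := i.isLt; have := posMax_le π; omega⟩)
      (by simpa using i.isLt)
    have h2 := ne_top_of_ne π (i := ⟨(i : ℕ), by have := i.isLt; have := posMax_le π; omega⟩)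
      (by simp; have := i.isLt; omega)
    have h3 := (π ⟨(i : ℕ), by have := i.isLt; have := posMax_le π; omega⟩).isLt
    have := posMax_le π
    omega
  · intro x y hxy
    have hx1 := front_ge π hπ (i := ⟨(x : ℕ), by have := x.isLt; have := posMax_le π; omega⟩)
      (by simpa using x.isLt)
    have hy1 := front_ge π hπ (i := ⟨(y : ℕ), by have := y.isLt; have := posMax_le π; omega⟩)
      (by simpa using y.isLt)
    have hv := congrArg Fin.val hxy
    simp only at hv
    have : (π ⟨(x : ℕ), by have := x.isLt; have := posMax_le π; omega⟩ : ℕ)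
        = (π ⟨(y : ℕ), by have := y.isLt; have := posMax_le π; omega⟩ : ℕ) := by omega
    have := π.injective (Fin.ext this)
    have := congrArg Fin.val this
    simp only at this
    exact Fin.ext this

/-- extracted back permutation -/
noncomputable def backPerm : Equiv.Perm (Fin (n - posMax π)) := by
  refine Equiv.ofBijective (fun j => (⟨(π ⟨posMax π + 1 + (j : ℕ),
      by have := j.isLt; have := posMax_le π; omega⟩ : ℕ), ?_⟩ : Fin (n - posMax π)))
    (Finite.injective_iff_bijective.mp ?_)
  · refine back_lt π hπ ?_
    show posMax π < posMax π + 1 + (j : ℕ)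
    omega
  · intro x y hxy
    have hv := congrArg Fin.val hxy
    simp only at hv
    have := π.injective (Fin.ext hv)
    have := congrArg Fin.val this
    simp only at this
    exact Fin.ext (by omega)

lemma splice_frontPerm_backPerm :
    splice (posMax_le π) (frontPerm π hπ) (backPerm π hπ) = π := by
  apply Equiv.ext
  intro x
  apply Fin.ext
  rw [splice_apply]
  unfold spliceFun
  by_cases hx : (x : ℕ) < posMax π
  · rw [dif_pos hx]
    show ((frontPerm π hπ) ⟨(x : ℕ), hx⟩ : ℕ) + (n - posMax π) = _
    have happ : ((frontPerm π hπ) ⟨(x : ℕ), hx⟩ : ℕ)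
        = (π ⟨(x : ℕ), by have := x.isLt; omega⟩ : ℕ) - (n - posMax π) := rfl
    rw [happ]
    have h1 := front_ge π hπ (i := ⟨(x : ℕ), by have := x.isLt; omega⟩) (by simpa using hx)
    have hxx : (⟨(x : ℕ), by have := x.isLt; omega⟩ : Fin (n+1)) = x := Fin.ext rfl
    rw [hxx] at h1 ⊢
    omega
  · by_cases hx' : (x : ℕ) = posMax π
    · rw [dif_neg hx, dif_pos hx']
      have : x = ⟨posMax π, Nat.lt_succ_iff.mpr (posMax_le π)⟩ := Fin.ext hx'
      rw [this, apply_posMax]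
    · rw [dif_neg hx, dif_neg hx']
      show ((backPerm π hπ) _ : ℕ) = _
      have happ : ((backPerm π hπ) ⟨(x : ℕ) - posMax π - 1, by have := x.isLt; omega⟩ : ℕ)
          = (π ⟨posMax π + 1 + ((x : ℕ) - posMax π - 1), by have := x.isLt; omega⟩ : ℕ) := rfl
      rw [happ]
      congr 2
      apply Fin.ext
      simp
      omega

end Extract2

section Master
variable {n : ℕ}

lemma splice_at_a {a : ℕ} (h : a ≤ n) (A : Equiv.Perm (Fin a)) (B : Equiv.Perm (Fin (n - a))) :
    splice h A B ⟨a, by omega⟩ = topF := by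
  apply Fin.ext
  rw [splice_apply]
  unfold spliceFun
  rw [dif_neg (by simp), dif_pos rfl]

lemma posMax_splice {a : ℕ} (h : a ≤ n) (A : Equiv.Perm (Fin a)) (B : Equiv.Perm (Fin (n - a))) :
    posMax (splice h A B) = a := by
  unfold posMax
  rw [← splice_at_a h A B, Equiv.symm_apply_apply]

lemma splice_injective2 {a : ℕ} (h : a ≤ n) (A A' : Equiv.Perm (Fin a))
    (B B' : Equiv.Perm (Fin (n - a)))
    (heq : splice h A B = splice h A' B') : A = A' ∧ B = B' := by
  constructor
  · apply Equiv.ext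
    intro i
    have hi : (i : ℕ) < a := i.isLt
    have := congrArg (fun σ : Equiv.Perm (Fin (n+1)) => σ ⟨(i : ℕ), by omega⟩) heq
    have hv := congrArg Fin.val this
    rw [splice_apply, splice_apply] at hv
    unfold spliceFun at hv
    rw [dif_pos hi, dif_pos hi] at hv
    simp only at hv
    apply Fin.ext
    have h1 : (⟨(i : ℕ), hi⟩ : Fin a) = i := Fin.ext rfl
    rw [h1] at hv
    omega
  · apply Equiv.ext
    intro j
    have hj : (j : ℕ) < n - a := j.isLt
    have key : ∀ (C : Equiv.Perm (Fin a)) (D : Equiv.Perm (Fin (n - a))),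
        ((splice h C D) ⟨a + 1 + (j : ℕ), by omega⟩ : ℕ) = (D j : ℕ) := by
      intro C D
      rw [splice_apply]
      unfold spliceFun
      rw [dif_neg (show ¬((⟨a + 1 + (j : ℕ), by omega⟩ : Fin (n+1)) : ℕ) < a by
          show ¬(a + 1 + (j : ℕ) < a); omega),
        dif_neg (show ¬((⟨a + 1 + (j : ℕ), by omega⟩ : Fin (n+1)) : ℕ) = a by
          show ¬(a + 1 + (j : ℕ) = a); omega)]
      show (D ⟨a + 1 + (j : ℕ) - a - 1, by omega⟩ : ℕ) = _
      congr 2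
      apply Fin.ext
      show a + 1 + (j : ℕ) - a - 1 = (j : ℕ)
      omega
    have h1 := key A B
    have h2 := key A' B'
    rw [heq] at h1
    apply Fin.ext
    omega

theorem master (P : ℕ → ℕ → Prop) [∀ r s, Decidable (P r s)] :
    (Finset.univ.filter (fun π : Equiv.Perm (Fin (n+1)) =>
       count132 π = 0 ∧ P (count123 π) (count12 π))).card
    = ∑ a ∈ Finset.range (n+1),
        (Finset.univ.filter (fun AB : Equiv.Perm (Fin a) × Equiv.Perm (Fin (n - a)) =>
          count132 AB.1 = 0 ∧ count132 AB.2 = 0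
          ∧ P (count123 AB.1 + count12 AB.1 + count123 AB.2)
              (count12 AB.1 + count12 AB.2 + a))).card := by
  rw [← Finset.card_sigma]
  apply Eq.symm
  apply Finset.card_bij
    (i := fun (s : Σ a : ℕ, Equiv.Perm (Fin a) × Equiv.Perm (Fin (n - a)))
      (hs : s ∈ (Finset.range (n+1)).sigma (fun a => Finset.univ.filter _)) =>
      splice (by
        have := (Finset.mem_sigma.mp hs).1
        rw [Finset.mem_range] at this
        omega) s.2.1 s.2.2)
  · intro s hs
    obtain ⟨hs1, hs2⟩ := Finset.mem_sigma.mp hs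
    rw [Finset.mem_filter] at hs2
    obtain ⟨-, h1, h2, h3⟩ := hs2
    rw [Finset.mem_filter]
    refine ⟨Finset.mem_univ _, ?_, ?_⟩
    · rw [count132_splice, h1, h2]
    · rw [count123_splice, count12_splice]
      exact h3
  · intro s hs t ht heq
    obtain ⟨hs1, -⟩ := Finset.mem_sigma.mp hs
    obtain ⟨ht1, -⟩ := Finset.mem_sigma.mp ht
    have ha : s.1 = t.1 := by
      have h1 := posMax_splice (by rw [Finset.mem_range] at hs1; omega : s.1 ≤ n) s.2.1 s.2.2
      have h2 := posMax_splice (by rw [Finset.mem_range] at ht1; omega : t.1 ≤ n) t.2.1 t.2.2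
      rw [← h1, ← h2, heq]
    obtain ⟨a, AB⟩ := s
    obtain ⟨a', AB'⟩ := t
    simp only at ha
    subst ha
    obtain ⟨hA, hB⟩ := splice_injective2 _ AB.1 AB'.1 AB.2 AB'.2 heq
    have : AB = AB' := Prod.ext hA hB
    rw [this]
  · intro π hπmem
    rw [Finset.mem_filter] at hπmem
    obtain ⟨-, hπ, hP⟩ := hπmem
    have hrec := splice_frontPerm_backPerm π hπ
    have h132 : count132 (frontPerm π hπ) = 0 ∧ count132 (backPerm π hπ) = 0 := by
      have h' := hπ
      rw [← hrec, count132_splice] at h'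
      omega
    have h123 := hP
    rw [← hrec, count123_splice, count12_splice] at h123
    refine ⟨⟨posMax π, frontPerm π hπ, backPerm π hπ⟩, ?_, hrec⟩
    rw [Finset.mem_sigma]
    constructor
    · rw [Finset.mem_range]
      exact Nat.lt_succ_of_le (posMax_le π)
    · rw [Finset.mem_filter]
      exact ⟨Finset.mem_univ _, h132.1, h132.2, h123⟩

end Master

section Small

lemma count123_eq_zero {n : ℕ} (π : Equiv.Perm (Fin n)) (h : count12 π ≤ 2) :
    count123 π = 0 := by
  by_contra hc
  have hpos : 0 < count123 π := Nat.pos_of_ne_zero hc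
  rw [count123, Finset.card_pos] at hpos
  obtain ⟨⟨i, j, k⟩, hmem⟩ := hpos
  rw [Finset.mem_filter] at hmem
  obtain ⟨-, h1, h2, h3, h4⟩ := hmem
  have hij : (i : ℕ) < (j : ℕ) := h1
  have hjk : (j : ℕ) < (k : ℕ) := h2
  have hsub : ({(i, j), (i, k), (j, k)} : Finset (Fin n × Fin n)) ⊆
      Finset.univ.filter (fun p : Fin n × Fin n => p.1 < p.2 ∧ π p.1 < π p.2) := by
    intro p hp
    rw [Finset.mem_insert, Finset.mem_insert, Finset.mem_singleton] at hp
    rw [Finset.mem_filter]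
    rcases hp with rfl | rfl | rfl
    · exact ⟨Finset.mem_univ _, h1, h3⟩
    · exact ⟨Finset.mem_univ _, h1.trans h2, h3.trans h4⟩
    · exact ⟨Finset.mem_univ _, h2, h4⟩
  have hcard : ({(i, j), (i, k), (j, k)} : Finset (Fin n × Fin n)).card = 3 := by
    rw [Finset.card_insert_of_notMem, Finset.card_insert_of_notMem, Finset.card_singleton]
    · rw [Finset.mem_singleton]
      intro hc'
      have h5 : (i : ℕ) = (j : ℕ) := congrArg Fin.val (congrArg Prod.fst hc')
      omega
    · rw [Finset.mem_insert, Finset.mem_singleton]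
      rintro (hc' | hc')
      · have h5 : (j : ℕ) = (k : ℕ) := congrArg Fin.val (congrArg Prod.snd hc')
        omega
      · have h5 : (i : ℕ) = (j : ℕ) := congrArg Fin.val (congrArg Prod.fst hc')
        omega
  have hle := Finset.card_le_card hsub
  rw [hcard] at hle
  rw [count12] at h
  omega

lemma count12_zero_of_le_one {n : ℕ} (hn : n ≤ 1) (π : Equiv.Perm (Fin n)) :
    count12 π = 0 := by
  rw [count12, Finset.card_eq_zero, Finset.filter_eq_empty_iff]
  intro p _
  rintro ⟨h1, -⟩
  have := p.1.isLt
  have := p.2.isLt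
  have : (p.1 : ℕ) < (p.2 : ℕ) := h1
  omega

lemma count132_zero_of_le_one {n : ℕ} (hn : n ≤ 2) (π : Equiv.Perm (Fin n)) :
    count132 π = 0 := by
  rw [count132, Finset.card_eq_zero, Finset.filter_eq_empty_iff]
  intro p _
  rintro ⟨h1, h2, -⟩
  have := p.1.isLt
  have := p.2.2.isLt
  have : (p.1 : ℕ) < (p.2.1 : ℕ) := h1
  have : (p.2.1 : ℕ) < (p.2.2 : ℕ) := h2
  omega

end Small

section Sequences

/-- #(132-avoiding perms of length n with c12 + n = 0) : indicator of n = 0 -/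
def E0 (n : ℕ) : ℕ :=
  (Finset.univ.filter (fun π : Equiv.Perm (Fin n) =>
    count132 π = 0 ∧ count12 π + n = 0)).card

def E1 (n : ℕ) : ℕ :=
  (Finset.univ.filter (fun π : Equiv.Perm (Fin n) =>
    count132 π = 0 ∧ count12 π + n = 1)).card

def E2 (n : ℕ) : ℕ :=
  (Finset.univ.filter (fun π : Equiv.Perm (Fin n) =>
    count132 π = 0 ∧ count12 π + n = 2)).card

def F0 (n : ℕ) : ℕ :=
  (Finset.univ.filter (fun π : Equiv.Perm (Fin n) =>
    count132 π = 0 ∧ count12 π = 0)).card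

def F1 (n : ℕ) : ℕ :=
  (Finset.univ.filter (fun π : Equiv.Perm (Fin n) =>
    count132 π = 0 ∧ count12 π = 1)).card

def F2 (n : ℕ) : ℕ :=
  (Finset.univ.filter (fun π : Equiv.Perm (Fin n) =>
    count132 π = 0 ∧ count12 π = 2)).card

def B0 (n : ℕ) : ℕ :=
  (Finset.univ.filter (fun π : Equiv.Perm (Fin n) =>
    count132 π = 0 ∧ count123 π = 0)).card

def B1 (n : ℕ) : ℕ :=
  (Finset.univ.filter (fun π : Equiv.Perm (Fin n) =>
    count132 π = 0 ∧ count123 π = 1)).card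

lemma E0_eq (n : ℕ) : E0 n = if n = 0 then 1 else 0 := by
  rcases n with _ | n
  · rw [E0, if_pos rfl]
    rw [Finset.filter_true_of_mem (fun π _ =>
      ⟨count132_zero_of_le_one (by omega) π, by rw [count12_zero_of_le_one (by omega) π]⟩)]
    simp
  · rw [E0, if_neg (by omega), Finset.card_eq_zero, Finset.filter_eq_empty_iff]
    intro π _
    rintro ⟨-, h⟩
    omega

lemma E1_eq (n : ℕ) : E1 n = if n = 1 then 1 else 0 := by
  rcases n with _ | _ | n
  · rw [E1, if_neg (by omega), Finset.card_eq_zero, Finset.filter_eq_empty_iff]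
    intro π _
    rintro ⟨-, h⟩
    rw [count12_zero_of_le_one (by omega) π] at h
    omega
  · rw [E1, if_pos rfl]
    rw [Finset.filter_true_of_mem (fun π _ =>
      ⟨count132_zero_of_le_one (by omega) π, by rw [count12_zero_of_le_one (by omega) π]⟩)]
    simp
  · rw [E1, if_neg (by omega), Finset.card_eq_zero, Finset.filter_eq_empty_iff]
    intro π _
    rintro ⟨-, h⟩
    omega

lemma E2_eq (n : ℕ) : E2 n = if n = 2 then 1 else 0 := by
  rcases n with _ | _ | _ | n
  · rw [E2, if_neg (by omega), Finset.card_eq_zero, Finset.filter_eq_empty_iff]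
    intro π _
    rintro ⟨-, h⟩
    rw [count12_zero_of_le_one (by omega) π] at h
    omega
  · rw [E2, if_neg (by omega), Finset.card_eq_zero, Finset.filter_eq_empty_iff]
    intro π _
    rintro ⟨-, h⟩
    rw [count12_zero_of_le_one (by omega) π] at h
    omega
  · rw [E2, if_pos rfl]
    have : ∀ π : Equiv.Perm (Fin 2),
        (count132 π = 0 ∧ count12 π + 2 = 2) ↔ (count12 π = 0) := by
      intro π
      constructor
      · rintro ⟨-, h⟩; omega
      · intro h
        exact ⟨count132_zero_of_le_one (by omega) π, by omega⟩
    rw [Finset.filter_congr (fun π _ => this π)]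
    decide
  · rw [E2, if_neg (by omega), Finset.card_eq_zero, Finset.filter_eq_empty_iff]
    intro π _
    rintro ⟨-, h⟩
    omega

end Sequences

section Recurrences

lemma card_filter_prod {α β : Type*} [Fintype α] [Fintype β] [DecidableEq α] [DecidableEq β]
    (p : α → Prop) (q : β → Prop) [DecidablePred p] [DecidablePred q] :
    (Finset.univ.filter (fun x : α × β => p x.1 ∧ q x.2)).card
      = (Finset.univ.filter p).card * (Finset.univ.filter q).card := by
  rw [← Finset.univ_product_univ, Finset.filter_product, Finset.card_product]

lemma F0_rec (n : ℕ) :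
    F0 (n+1) = ∑ a ∈ Finset.range (n+1), E0 a * F0 (n-a) := by
  have h := master (n := n) (fun _ s => s = 0)
  rw [F0, h]
  apply Finset.sum_congr rfl
  intro a ha
  have hiff : ∀ AB : Equiv.Perm (Fin a) × Equiv.Perm (Fin (n-a)),
      (count132 AB.1 = 0 ∧ count132 AB.2 = 0
        ∧ count12 AB.1 + count12 AB.2 + a = 0)
      ↔ ((count132 AB.1 = 0 ∧ count12 AB.1 + a = 0)
          ∧ (count132 AB.2 = 0 ∧ count12 AB.2 = 0)) := by
    intro AB; constructor
    · rintro ⟨hA, hB, hs⟩; exact ⟨⟨hA, by omega⟩, hB, by omega⟩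
    · rintro ⟨⟨hA, h1⟩, hB, h2⟩; exact ⟨hA, hB, by omega⟩
  rw [Finset.filter_congr (fun x _ => hiff x),
    card_filter_prod (fun A : Equiv.Perm (Fin a) => count132 A = 0 ∧ count12 A + a = 0)
      (fun B : Equiv.Perm (Fin (n-a)) => count132 B = 0 ∧ count12 B = 0)]
  rfl

lemma F1_rec (n : ℕ) :
    F1 (n+1) = ∑ a ∈ Finset.range (n+1), (E0 a * F1 (n-a) + E1 a * F0 (n-a)) := by
  have h := master (n := n) (fun _ s => s = 1)
  rw [F1, h]
  apply Finset.sum_congr rfl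
  intro a ha
  have hiff : ∀ AB : Equiv.Perm (Fin a) × Equiv.Perm (Fin (n-a)),
      (count132 AB.1 = 0 ∧ count132 AB.2 = 0
        ∧ count12 AB.1 + count12 AB.2 + a = 1)
      ↔ (((count132 AB.1 = 0 ∧ count12 AB.1 + a = 0)
          ∧ (count132 AB.2 = 0 ∧ count12 AB.2 = 1))
        ∨ ((count132 AB.1 = 0 ∧ count12 AB.1 + a = 1)
          ∧ (count132 AB.2 = 0 ∧ count12 AB.2 = 0))) := by
    intro AB; constructor
    · rintro ⟨hA, hB, hs⟩
      rcases Nat.lt_or_ge (count12 AB.2) 1 with h2 | h2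
      · exact Or.inr ⟨⟨hA, by omega⟩, hB, by omega⟩
      · exact Or.inl ⟨⟨hA, by omega⟩, hB, by omega⟩
    · rintro (⟨⟨hA, h1⟩, hB, h2⟩ | ⟨⟨hA, h1⟩, hB, h2⟩) <;> exact ⟨hA, hB, by omega⟩
  rw [Finset.filter_congr (fun x _ => hiff x), Finset.filter_or,
    Finset.card_union_of_disjoint,
    card_filter_prod (fun A : Equiv.Perm (Fin a) => count132 A = 0 ∧ count12 A + a = 0)
      (fun B : Equiv.Perm (Fin (n-a)) => count132 B = 0 ∧ count12 B = 1),
    card_filter_prod (fun A : Equiv.Perm (Fin a) => count132 A = 0 ∧ count12 A + a = 1)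
      (fun B : Equiv.Perm (Fin (n-a)) => count132 B = 0 ∧ count12 B = 0)]
  · rfl
  · rw [Finset.disjoint_left]
    intro x h1 h2
    simp only [Finset.mem_filter, Finset.mem_union, Finset.mem_univ, true_and] at h1 h2
    omega

lemma F2_rec (n : ℕ) :
    F2 (n+1) = ∑ a ∈ Finset.range (n+1),
      (E0 a * F2 (n-a) + (E1 a * F1 (n-a) + E2 a * F0 (n-a))) := by
  have h := master (n := n) (fun _ s => s = 2)
  rw [F2, h]
  apply Finset.sum_congr rfl
  intro a ha
  have hiff : ∀ AB : Equiv.Perm (Fin a) × Equiv.Perm (Fin (n-a)),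
      (count132 AB.1 = 0 ∧ count132 AB.2 = 0
        ∧ count12 AB.1 + count12 AB.2 + a = 2)
      ↔ (((count132 AB.1 = 0 ∧ count12 AB.1 + a = 0)
          ∧ (count132 AB.2 = 0 ∧ count12 AB.2 = 2))
        ∨ (((count132 AB.1 = 0 ∧ count12 AB.1 + a = 1)
          ∧ (count132 AB.2 = 0 ∧ count12 AB.2 = 1))
        ∨ ((count132 AB.1 = 0 ∧ count12 AB.1 + a = 2)
          ∧ (count132 AB.2 = 0 ∧ count12 AB.2 = 0)))) := by
    intro AB; constructor
    · rintro ⟨hA, hB, hs⟩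
      rcases Nat.lt_or_ge (count12 AB.2) 1 with h2 | h2
      · exact Or.inr (Or.inr ⟨⟨hA, by omega⟩, hB, by omega⟩)
      · rcases Nat.lt_or_ge (count12 AB.2) 2 with h3 | h3
        · exact Or.inr (Or.inl ⟨⟨hA, by omega⟩, hB, by omega⟩)
        · exact Or.inl ⟨⟨hA, by omega⟩, hB, by omega⟩
    · rintro (⟨⟨hA, h1⟩, hB, h2⟩ | ⟨⟨hA, h1⟩, hB, h2⟩ | ⟨⟨hA, h1⟩, hB, h2⟩) <;>
        exact ⟨hA, hB, by omega⟩
  rw [Finset.filter_congr (fun x _ => hiff x), Finset.filter_or, Finset.filter_or,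
    Finset.card_union_of_disjoint, Finset.card_union_of_disjoint,
    card_filter_prod (fun A : Equiv.Perm (Fin a) => count132 A = 0 ∧ count12 A + a = 0)
      (fun B : Equiv.Perm (Fin (n-a)) => count132 B = 0 ∧ count12 B = 2),
    card_filter_prod (fun A : Equiv.Perm (Fin a) => count132 A = 0 ∧ count12 A + a = 1)
      (fun B : Equiv.Perm (Fin (n-a)) => count132 B = 0 ∧ count12 B = 1),
    card_filter_prod (fun A : Equiv.Perm (Fin a) => count132 A = 0 ∧ count12 A + a = 2)
      (fun B : Equiv.Perm (Fin (n-a)) => count132 B = 0 ∧ count12 B = 0)]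
  · rfl
  · rw [Finset.disjoint_left]
    intro x h1 h2
    simp only [Finset.mem_filter, Finset.mem_union, Finset.mem_univ, true_and] at h1 h2
    omega
  · rw [Finset.disjoint_left]
    intro x h1 h2
    simp only [Finset.mem_filter, Finset.mem_union, Finset.mem_univ, true_and] at h1 h2
    omega

lemma B0_rec (n : ℕ) :
    B0 (n+1) = ∑ a ∈ Finset.range (n+1), F0 a * B0 (n-a) := by
  have h := master (n := n) (fun r _ => r = 0)
  rw [B0, h]
  apply Finset.sum_congr rfl
  intro a ha
  have hiff : ∀ AB : Equiv.Perm (Fin a) × Equiv.Perm (Fin (n-a)),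
      (count132 AB.1 = 0 ∧ count132 AB.2 = 0
        ∧ count123 AB.1 + count12 AB.1 + count123 AB.2 = 0)
      ↔ ((count132 AB.1 = 0 ∧ count12 AB.1 = 0)
          ∧ (count132 AB.2 = 0 ∧ count123 AB.2 = 0)) := by
    intro AB; constructor
    · rintro ⟨hA, hB, hs⟩; exact ⟨⟨hA, by omega⟩, hB, by omega⟩
    · rintro ⟨⟨hA, h1⟩, hB, h2⟩
      have h3 := count123_eq_zero AB.1 (by omega)
      exact ⟨hA, hB, by omega⟩
  rw [Finset.filter_congr (fun x _ => hiff x),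
    card_filter_prod (fun A : Equiv.Perm (Fin a) => count132 A = 0 ∧ count12 A = 0)
      (fun B : Equiv.Perm (Fin (n-a)) => count132 B = 0 ∧ count123 B = 0)]
  rfl

lemma B1_rec (n : ℕ) :
    B1 (n+1) = ∑ a ∈ Finset.range (n+1), (F0 a * B1 (n-a) + F1 a * B0 (n-a)) := by
  have h := master (n := n) (fun r _ => r = 1)
  rw [B1, h]
  apply Finset.sum_congr rfl
  intro a ha
  have hiff : ∀ AB : Equiv.Perm (Fin a) × Equiv.Perm (Fin (n-a)),
      (count132 AB.1 = 0 ∧ count132 AB.2 = 0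
        ∧ count123 AB.1 + count12 AB.1 + count123 AB.2 = 1)
      ↔ (((count132 AB.1 = 0 ∧ count12 AB.1 = 0)
          ∧ (count132 AB.2 = 0 ∧ count123 AB.2 = 1))
        ∨ ((count132 AB.1 = 0 ∧ count12 AB.1 = 1)
          ∧ (count132 AB.2 = 0 ∧ count123 AB.2 = 0))) := by
    intro AB; constructor
    · rintro ⟨hA, hB, hs⟩
      have h3 := count123_eq_zero AB.1 (by omega)
      rcases Nat.lt_or_ge (count12 AB.1) 1 with h2 | h2
      · exact Or.inl ⟨⟨hA, by omega⟩, hB, by omega⟩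
      · exact Or.inr ⟨⟨hA, by omega⟩, hB, by omega⟩
    · rintro (⟨⟨hA, h1⟩, hB, h2⟩ | ⟨⟨hA, h1⟩, hB, h2⟩) <;>
        · have h3 := count123_eq_zero AB.1 (by omega)
          exact ⟨hA, hB, by omega⟩
  rw [Finset.filter_congr (fun x _ => hiff x), Finset.filter_or,
    Finset.card_union_of_disjoint,
    card_filter_prod (fun A : Equiv.Perm (Fin a) => count132 A = 0 ∧ count12 A = 0)
      (fun B : Equiv.Perm (Fin (n-a)) => count132 B = 0 ∧ count123 B = 1),
    card_filter_prod (fun A : Equiv.Perm (Fin a) => count132 A = 0 ∧ count12 A = 1)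
      (fun B : Equiv.Perm (Fin (n-a)) => count132 B = 0 ∧ count123 B = 0)]
  · rfl
  · rw [Finset.disjoint_left]
    intro x h1 h2
    simp only [Finset.mem_filter, Finset.mem_union, Finset.mem_univ, true_and] at h1 h2
    omega

lemma A_rec (n : ℕ) :
    A (n+1) = ∑ a ∈ Finset.range (n+1),
      (F0 a * A (n-a) + (F1 a * B1 (n-a) + F2 a * B0 (n-a))) := by
  have h := master (n := n) (fun r _ => r = 2)
  rw [A, h]
  apply Finset.sum_congr rfl
  intro a ha
  have hiff : ∀ AB : Equiv.Perm (Fin a) × Equiv.Perm (Fin (n-a)),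
      (count132 AB.1 = 0 ∧ count132 AB.2 = 0
        ∧ count123 AB.1 + count12 AB.1 + count123 AB.2 = 2)
      ↔ (((count132 AB.1 = 0 ∧ count12 AB.1 = 0)
          ∧ (count132 AB.2 = 0 ∧ count123 AB.2 = 2))
        ∨ (((count132 AB.1 = 0 ∧ count12 AB.1 = 1)
          ∧ (count132 AB.2 = 0 ∧ count123 AB.2 = 1))
        ∨ ((count132 AB.1 = 0 ∧ count12 AB.1 = 2)
          ∧ (count132 AB.2 = 0 ∧ count123 AB.2 = 0)))) := by
    intro AB; constructor
    · rintro ⟨hA, hB, hs⟩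
      have h3 := count123_eq_zero AB.1 (by omega)
      rcases Nat.lt_or_ge (count12 AB.1) 1 with h2 | h2
      · exact Or.inl ⟨⟨hA, by omega⟩, hB, by omega⟩
      · rcases Nat.lt_or_ge (count12 AB.1) 2 with h4 | h4
        · exact Or.inr (Or.inl ⟨⟨hA, by omega⟩, hB, by omega⟩)
        · exact Or.inr (Or.inr ⟨⟨hA, by omega⟩, hB, by omega⟩)
    · rintro (⟨⟨hA, h1⟩, hB, h2⟩ | ⟨⟨hA, h1⟩, hB, h2⟩ | ⟨⟨hA, h1⟩, hB, h2⟩) <;>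
        · have h3 := count123_eq_zero AB.1 (by omega)
          exact ⟨hA, hB, by omega⟩
  rw [Finset.filter_congr (fun x _ => hiff x), Finset.filter_or, Finset.filter_or,
    Finset.card_union_of_disjoint, Finset.card_union_of_disjoint,
    card_filter_prod (fun A : Equiv.Perm (Fin a) => count132 A = 0 ∧ count12 A = 0)
      (fun B : Equiv.Perm (Fin (n-a)) => count132 B = 0 ∧ count123 B = 2),
    card_filter_prod (fun A : Equiv.Perm (Fin a) => count132 A = 0 ∧ count12 A = 1)
      (fun B : Equiv.Perm (Fin (n-a)) => count132 B = 0 ∧ count123 B = 1),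
    card_filter_prod (fun A : Equiv.Perm (Fin a) => count132 A = 0 ∧ count12 A = 2)
      (fun B : Equiv.Perm (Fin (n-a)) => count132 B = 0 ∧ count123 B = 0)]
  · rfl
  · rw [Finset.disjoint_left]
    intro x h1 h2
    simp only [Finset.mem_filter, Finset.mem_union, Finset.mem_univ, true_and] at h1 h2
    omega
  · rw [Finset.disjoint_left]
    intro x h1 h2
    simp only [Finset.mem_filter, Finset.mem_union, Finset.mem_univ, true_and] at h1 h2
    omega

end Recurrences

section Initial

lemma F0_zero : F0 0 = 1 := by
  rw [F0, Finset.filter_true_of_mem (fun π _ =>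
    ⟨count132_zero_of_le_one (by omega) π, count12_zero_of_le_one (by omega) π⟩)]
  simp

lemma B0_zero : B0 0 = 1 := by
  rw [B0, Finset.filter_true_of_mem (fun π _ =>
    ⟨count132_zero_of_le_one (by omega) π,
      count123_eq_zero π (by rw [count12_zero_of_le_one (by omega) π]; omega)⟩)]
  simp

lemma F1_zero : F1 0 = 0 := by
  rw [F1, Finset.card_eq_zero, Finset.filter_eq_empty_iff]
  intro π _
  rintro ⟨-, hc⟩
  rw [count12_zero_of_le_one (by omega) π] at hc
  omega

lemma F2_zero : F2 0 = 0 := by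
  rw [F2, Finset.card_eq_zero, Finset.filter_eq_empty_iff]
  intro π _
  rintro ⟨-, hc⟩
  rw [count12_zero_of_le_one (by omega) π] at hc
  omega

lemma B1_zero : B1 0 = 0 := by
  rw [B1, Finset.card_eq_zero, Finset.filter_eq_empty_iff]
  intro π _
  rintro ⟨-, hc⟩
  rw [count123_eq_zero π (by rw [count12_zero_of_le_one (by omega) π]; omega)] at hc
  omega

lemma A_zero : A 0 = 0 := by
  rw [A, Finset.card_eq_zero, Finset.filter_eq_empty_iff]
  intro π _
  rintro ⟨-, hc⟩
  rw [count123_eq_zero π (by rw [count12_zero_of_le_one (by omega) π]; omega)] at hc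
  omega

end Initial

section Series
open PowerSeries

lemma coeff_mul_range (u v : ℕ → ℚ) (n : ℕ) :
    (PowerSeries.coeff n) (PowerSeries.mk u * PowerSeries.mk v)
      = ∑ a ∈ Finset.range (n+1), u a * v (n - a) := by
  rw [PowerSeries.coeff_mul, Finset.Nat.sum_antidiagonal_eq_sum_range_succ_mk]
  simp

lemma mkE0_eq : PowerSeries.mk (fun n => (E0 n : ℚ)) = 1 := by
  ext n
  rw [PowerSeries.coeff_mk, PowerSeries.coeff_one, E0_eq]
  split <;> simp

lemma mkE1_eq : PowerSeries.mk (fun n => (E1 n : ℚ)) = PowerSeries.X := by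
  ext n
  rw [PowerSeries.coeff_mk, PowerSeries.coeff_X, E1_eq]
  split <;> simp_all

lemma mkE2_eq : PowerSeries.mk (fun n => (E2 n : ℚ)) = PowerSeries.X ^ 2 := by
  ext n
  rw [PowerSeries.coeff_mk, PowerSeries.coeff_X_pow, E2_eq]
  split <;> simp_all

end Series

section Relations
open PowerSeries

noncomputable def sE0 : PowerSeries ℚ := PowerSeries.mk fun n => (E0 n : ℚ)
noncomputable def sE1 : PowerSeries ℚ := PowerSeries.mk fun n => (E1 n : ℚ)
noncomputable def sE2 : PowerSeries ℚ := PowerSeries.mk fun n => (E2 n : ℚ)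
noncomputable def sF0 : PowerSeries ℚ := PowerSeries.mk fun n => (F0 n : ℚ)
noncomputable def sF1 : PowerSeries ℚ := PowerSeries.mk fun n => (F1 n : ℚ)
noncomputable def sF2 : PowerSeries ℚ := PowerSeries.mk fun n => (F2 n : ℚ)
noncomputable def sB0 : PowerSeries ℚ := PowerSeries.mk fun n => (B0 n : ℚ)
noncomputable def sB1 : PowerSeries ℚ := PowerSeries.mk fun n => (B1 n : ℚ)
noncomputable def sA : PowerSeries ℚ := PowerSeries.mk fun n => (A n : ℚ)

lemma rel_F0 : sF0 = 1 + X * (sE0 * sF0) := by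
  ext n
  rcases n with _ | n
  · simp [sF0, PowerSeries.coeff_zero_eq_constantCoeff, F0_zero]
  · rw [sF0, sE0, PowerSeries.coeff_mk, map_add, PowerSeries.coeff_succ_X_mul,
      coeff_mul_range, F0_rec]
    push_cast
    simp [PowerSeries.coeff_one]

lemma rel_F1 : sF1 = X * (sE0 * sF1 + sE1 * sF0) := by
  ext n
  rcases n with _ | n
  · simp [sF1, PowerSeries.coeff_zero_eq_constantCoeff, F1_zero]
  · rw [sF1, sE0, sE1, sF0, PowerSeries.coeff_mk, PowerSeries.coeff_succ_X_mul, map_add,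
      coeff_mul_range, coeff_mul_range, ← Finset.sum_add_distrib, F1_rec]
    push_cast
    rfl

lemma rel_F2 : sF2 = X * (sE0 * sF2 + (sE1 * sF1 + sE2 * sF0)) := by
  ext n
  rcases n with _ | n
  · simp [sF2, PowerSeries.coeff_zero_eq_constantCoeff, F2_zero]
  · rw [sF2, sE0, sE1, sE2, sF0, sF1, PowerSeries.coeff_mk, PowerSeries.coeff_succ_X_mul,
      map_add, map_add, coeff_mul_range, coeff_mul_range, coeff_mul_range,
      ← Finset.sum_add_distrib, ← Finset.sum_add_distrib, F2_rec]
    push_cast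
    rfl

lemma rel_B0 : sB0 = 1 + X * (sF0 * sB0) := by
  ext n
  rcases n with _ | n
  · simp [sB0, PowerSeries.coeff_zero_eq_constantCoeff, B0_zero]
  · rw [sB0, sF0, PowerSeries.coeff_mk, map_add, PowerSeries.coeff_succ_X_mul,
      coeff_mul_range, B0_rec]
    push_cast
    simp [PowerSeries.coeff_one]

lemma rel_B1 : sB1 = X * (sF0 * sB1 + sF1 * sB0) := by
  ext n
  rcases n with _ | n
  · simp [sB1, PowerSeries.coeff_zero_eq_constantCoeff, B1_zero]
  · rw [sB1, sF0, sF1, sB0, PowerSeries.coeff_mk, PowerSeries.coeff_succ_X_mul, map_add,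
      coeff_mul_range, coeff_mul_range, ← Finset.sum_add_distrib, B1_rec]
    push_cast
    rfl

lemma rel_A : sA = X * (sF0 * sA + (sF1 * sB1 + sF2 * sB0)) := by
  ext n
  rcases n with _ | n
  · simp [sA, PowerSeries.coeff_zero_eq_constantCoeff, A_zero]
  · rw [sA, sF0, sF1, sF2, sB0, sB1, PowerSeries.coeff_mk, PowerSeries.coeff_succ_X_mul,
      map_add, map_add, coeff_mul_range, coeff_mul_range, coeff_mul_range,
      ← Finset.sum_add_distrib, ← Finset.sum_add_distrib, A_rec]
    push_cast
    rfl

lemma key : (1 - 2 * PowerSeries.X) ^ 3 * sA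
    = PowerSeries.X ^ 4 * (1 - PowerSeries.X) := by
  have he0 := mkE0_eq
  have he1 := mkE1_eq
  have he2 := mkE2_eq
  rw [show PowerSeries.mk (fun n => (E0 n : ℚ)) = sE0 from rfl] at he0
  rw [show PowerSeries.mk (fun n => (E1 n : ℚ)) = sE1 from rfl] at he1
  rw [show PowerSeries.mk (fun n => (E2 n : ℚ)) = sE2 from rfl] at he2
  have hf0 : sF0 = 1 + X * sF0 := by
    have := rel_F0; rw [he0] at this; linear_combination this
  have hf1 : sF1 = X * sF1 + X^2 * sF0 := by
    have := rel_F1; rw [he0, he1] at this; linear_combination this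
  have hf2 : sF2 = X * sF2 + X^2 * sF1 + X^3 * sF0 := by
    have := rel_F2; rw [he0, he1, he2] at this; linear_combination this
  have hb0 := rel_B0
  have hb1 := rel_B1
  have ha := rel_A
  -- step lemmas
  have step1 : (1 - X) * sF0 = 1 := by linear_combination hf0
  have step2 : (1 - X) * sF1 = X^2 * sF0 := by linear_combination hf1
  have step3 : (1 - X) * sF2 = X^2 * sF1 + X^3 * sF0 := by linear_combination hf2
  have step4 : (1 - 2*X) * sB0 = 1 - X := by
    linear_combination (1 - X) * hb0 + X * sB0 * step1
  have c1 : (1 - 2*X) * sB1 = X * ((1-X) * sF1) * sB0 := by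
    linear_combination (1 - X) * hb1 + X * sB1 * step1
  have c2 : (1 - 2*X) * sB1 = X^3 * (sF0 * sB0) := by
    linear_combination c1 + X * sB0 * step2
  have step5 : (1 - 2*X)^2 * sB1 = X^3 := by
    linear_combination (1 - 2*X) * c2 + X^3 * sF0 * step4 + X^3 * step1
  have d1 : (1 - 2*X) * sA = X * ((1-X) * sF1) * sB1 + X * ((1-X) * sF2) * sB0 := by
    linear_combination (1 - X) * ha + X * sA * step1
  have d2 : (1 - 2*X) * sA = X^3 * (sF0 * sB1) + X * (X^2 * sF1 + X^3 * sF0) * sB0 := by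
    linear_combination d1 + X * sB1 * step2 + X * sB0 * step3
  linear_combination (1 - 2*X)^2 * d2 + X^3 * sF0 * step5
    + (X^3 * sF1 + X^4 * sF0) * (1 - 2*X) * step4
    + X^3 * (1 - 2*X) * step2 + X^4 * (1 - X) * step1

end Relations


theorem genfun_no132_2 :
    (1 - 2 * PowerSeries.X) ^ 3 * PowerSeries.mk (fun n => (A n : ℚ)) = PowerSeries.X ^ 4 * (1 - PowerSeries.X) := by
  exact key
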